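/- The function q(b) = (1/2)[b² - K(b)² + K(b)(b - a(b)) - K(b)² log(b/a(b))], where K(b) = -(e-1)b(b²e - 2)/(2 + (e-2)b²e) and a(b) = (b²e - 2)/((e-1)b), is continuous and strictly decreasing on the interval (√(2/e), √2), with limit 1/e as b → √(2/e)⁺ and limit 0 as b → √2⁻; hence q is a bijection from (√(2/e), √2) onto (0, 1/e). -/

import Mathlib

open Real Filter

/-- `K(b) = -(e-1)b(b²e - 2)/(2 + (e-2)b²e)`. -/
noncomputable def Kfun (b : ℝ) : ℝ :=
  -((Real.exp 1 - 1) * b * (b ^ 2 * Real.exp 1 - 2)) /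
    (2 + (Real.exp 1 - 2) * b ^ 2 * Real.exp 1)

/-- `a(b) = (b²e - 2)/((e-1)b)`. -/
noncomputable def afun (b : ℝ) : ℝ :=
  (b ^ 2 * Real.exp 1 - 2) / ((Real.exp 1 - 1) * b)

/-- `q(b) = (1/2)[b² - K(b)² + K(b)(b - a(b)) - K(b)² log(b/a(b))]`. -/
noncomputable def qfun (b : ℝ) : ℝ :=
  (1 / 2) * (b ^ 2 - (Kfun b) ^ 2 + Kfun b * (b - afun b) -
    (Kfun b) ^ 2 * Real.log (b / afun b))

/-- auxiliary: `K` generalized in the constant `c`. -/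
noncomputable def Kg (c b : ℝ) : ℝ :=
  -((c - 1) * b * (b ^ 2 * c - 2)) / (2 + (c - 2) * b ^ 2 * c)

/-- auxiliary: `a` generalized in the constant `c`. -/
noncomputable def Ag (c b : ℝ) : ℝ := (b ^ 2 * c - 2) / ((c - 1) * b)

/-- auxiliary: derivative of `K`. -/
noncomputable def KDg (c b : ℝ) : ℝ :=
  (-((c - 1) * 1 * (b ^ 2 * c - 2) + (c - 1) * b * (2 * b * c)) *
      (2 + (c - 2) * b ^ 2 * c) -
    -((c - 1) * b * (b ^ 2 * c - 2)) * ((c - 2) * (2 * b) * c)) /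
    (2 + (c - 2) * b ^ 2 * c) ^ 2

/-- auxiliary: derivative of `a`. -/
noncomputable def ADg (c b : ℝ) : ℝ :=
  (2 * b * c * ((c - 1) * b) - (b ^ 2 * c - 2) * ((c - 1) * 1)) / ((c - 1) * b) ^ 2

/-- auxiliary: derivative of `q`. -/
noncomputable def Vg (c b : ℝ) : ℝ :=
  1 / 2 *
    (2 * b - ((2 : ℕ) : ℝ) * Kg c b ^ (2 - 1) * KDg c b +
        (KDg c b * (b - Ag c b) + Kg c b * (1 - ADg c b)) -
      (((2 : ℕ) : ℝ) * Kg c b ^ (2 - 1) * KDg c b * Real.log (b / Ag c b) +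
        Kg c b ^ 2 *
          ((1 * Ag c b - b * ADg c b) / Ag c b ^ 2 / (b / Ag c b))))

lemma c_gt : (2:ℝ) < Real.exp 1 := by
  have := Real.exp_one_gt_d9; linarith

set_option maxHeartbeats 4000000 in
/-- The derivative of `q` is negative. -/
lemma Vg_neg (c b : ℝ) (hc2 : 2 < c) (hb0 : 0 < b)
    (hbc : 2 < b ^ 2 * c) (hb2 : b ^ 2 < 2) : Vg c b < 0 := by
  have hc1 : (0:ℝ) < c - 1 := by linarith
  have hS : 0 < b ^ 2 * c - 2 := by linarith
  have hb2' : 0 < b ^ 2 := by positivity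
  have hD : 0 < 2 + (c - 2) * b ^ 2 * c := by nlinarith
  have hcb0 : 0 < (c - 1) * b := mul_pos hc1 hb0
  have hA : 0 < (b ^ 2 * c - 2) / ((c - 1) * b) := div_pos hS hcb0
  unfold Vg Kg Ag KDg ADg
  set l := Real.log (b / ((b ^ 2 * c - 2) / ((c - 1) * b))) with hl
  -- the log lower bound
  have hm : 1 - ((b ^ 2 * c - 2) / ((c - 1) * b)) / b ≤ l := by
    have h3 := Real.log_le_sub_one_of_pos (div_pos hA hb0)
    have h4 : l = - Real.log ((b ^ 2 * c - 2) / ((c - 1) * b) / b) := by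
      rw [hl, Real.log_div hb0.ne' hA.ne', Real.log_div hA.ne' hb0.ne']
      ring
    rw [h4]; linarith
  -- sign of K and K'
  have hKB : -((c - 1) * b * (b ^ 2 * c - 2)) / (2 + (c - 2) * b ^ 2 * c) < 0 := by
    apply div_neg_of_neg_of_pos _ hD
    nlinarith
  have hKD : (-((c - 1) * 1 * (b ^ 2 * c - 2) + (c - 1) * b * (2 * b * c)) *
      (2 + (c - 2) * b ^ 2 * c) -
    -((c - 1) * b * (b ^ 2 * c - 2)) * ((c - 2) * (2 * b) * c)) /
    (2 + (c - 2) * b ^ 2 * c) ^ 2 < 0 := by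
    apply div_neg_of_neg_of_pos _ (by positivity)
    nlinarith [mul_pos hb2' (mul_pos hb2' (mul_pos (show (0:ℝ) < c by linarith)
      (show (0:ℝ) < c by linarith)))]
  have hKK : 0 < (-((c - 1) * b * (b ^ 2 * c - 2)) / (2 + (c - 2) * b ^ 2 * c)) *
      ((-((c - 1) * 1 * (b ^ 2 * c - 2) + (c - 1) * b * (2 * b * c)) *
      (2 + (c - 2) * b ^ 2 * c) -
    -((c - 1) * b * (b ^ 2 * c - 2)) * ((c - 2) * (2 * b) * c)) /
    (2 + (c - 2) * b ^ 2 * c) ^ 2) := mul_pos_of_neg_of_neg hKB hKD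
  -- the factored bound
  have hG : -(c*(c-2))*b^4 - 2*(c^2-2*c+3)*b^2 + 4 < 0 := by
    nlinarith [mul_pos hb2' (show (0:ℝ) < c by linarith), sq_nonneg (c-1),
      sq_nonneg (b^2*c - 2)]
  have hRHS : 2*(c-1)*(b^2*c-2)*(-(c*(c-2))*b^4 - 2*(c^2-2*c+3)*b^2 + 4) /
      (b*(2+(c-2)*b^2*c)^3) < 0 := by
    apply div_neg_of_neg_of_pos _ (by positivity)
    have h5 : 0 < 2*(c-1)*(b^2*c-2) := by positivity
    exact mul_neg_of_pos_of_neg h5 hG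
  -- main reduction
  have main : ∀ v : ℝ,
      v + ((-((c - 1) * b * (b ^ 2 * c - 2)) / (2 + (c - 2) * b ^ 2 * c)) *
      ((-((c - 1) * 1 * (b ^ 2 * c - 2) + (c - 1) * b * (2 * b * c)) *
      (2 + (c - 2) * b ^ 2 * c) -
    -((c - 1) * b * (b ^ 2 * c - 2)) * ((c - 2) * (2 * b) * c)) /
    (2 + (c - 2) * b ^ 2 * c) ^ 2)) *
        (l - (1 - ((b ^ 2 * c - 2) / ((c - 1) * b)) / b)) =
      2*(c-1)*(b^2*c-2)*(-(c*(c-2))*b^4 - 2*(c^2-2*c+3)*b^2 + 4) /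
      (b*(2+(c-2)*b^2*c)^3) → v < 0 := by
    intro v hv
    nlinarith [mul_nonneg hKK.le (sub_nonneg.mpr hm)]
  apply main
  push_cast
  have hD' : 2 + b ^ 2 * c * (c - 2) ≠ 0 := by nlinarith
  field_simp [hb0.ne', hD.ne', hc1.ne', hS.ne', hD']
  ring

/-- `q` is differentiable with derivative `Vg`. -/
lemma qfun_hasDerivAt (b : ℝ) (hb0 : 0 < b) (hbc : 2 < b ^ 2 * Real.exp 1) :
    HasDerivAt qfun (Vg (Real.exp 1) b) b := by
  set c := Real.exp 1 with hc
  have hc2 : (2:ℝ) < c := c_gt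
  have hc1 : (0:ℝ) < c - 1 := by linarith
  have hS : 0 < b ^ 2 * c - 2 := by linarith
  have hb2 : 0 < b ^ 2 := by positivity
  have hD : 0 < 2 + (c - 2) * b ^ 2 * c := by nlinarith
  have hcb0 : 0 < (c - 1) * b := mul_pos hc1 hb0
  have hcb : ((c - 1) * b) ≠ 0 := hcb0.ne'
  have hA : 0 < (b ^ 2 * c - 2) / ((c - 1) * b) := div_pos hS hcb0
  have hBA : 0 < b / ((b ^ 2 * c - 2) / ((c - 1) * b)) := div_pos hb0 hA
  have h1 : HasDerivAt (fun x : ℝ => x ^ 2) (2 * b) b := by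
    simpa using hasDerivAt_pow 2 b
  have hSd : HasDerivAt (fun x : ℝ => x ^ 2 * c - 2) (2 * b * c) b :=
    (h1.mul_const c).sub_const 2
  have hlin : HasDerivAt (fun x : ℝ => (c - 1) * x) ((c - 1) * 1) b :=
    (hasDerivAt_id b).const_mul (c - 1)
  have hN : HasDerivAt (fun x : ℝ => -((c - 1) * x * (x ^ 2 * c - 2)))
      (-((c - 1) * 1 * (b ^ 2 * c - 2) + (c - 1) * b * (2 * b * c))) b :=
    (hlin.mul hSd).neg
  have hDen : HasDerivAt (fun x : ℝ => 2 + (c - 2) * x ^ 2 * c)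
      ((c - 2) * (2 * b) * c) b :=
    ((h1.const_mul (c - 2)).mul_const c).const_add 2
  have hK : HasDerivAt Kfun (KDg c b) b := hN.div hDen hD.ne'
  have ha : HasDerivAt afun (ADg c b) b := hSd.div hlin hcb
  have hinner : HasDerivAt (fun x : ℝ => x / afun x)
      ((1 * Ag c b - b * ADg c b) / Ag c b ^ 2) b :=
    (hasDerivAt_id b).div ha (by rw [afun]; exact hA.ne')
  have hlog : HasDerivAt (fun x : ℝ => Real.log (x / afun x))
      ((1 * Ag c b - b * ADg c b) / Ag c b ^ 2 / (b / Ag c b)) b :=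
    hinner.log (by rw [afun]; exact hBA.ne')
  have hK2 := hK.pow 2
  exact ((((h1.sub hK2).add (hK.mul ((hasDerivAt_id b).sub ha))).sub
      (hK2.mul hlog)).const_mul (1/2 : ℝ))

lemma qfun_sqrt_two : qfun (Real.sqrt 2) = 0 := by
  have hs2 : (Real.sqrt 2) ^ 2 = 2 := Real.sq_sqrt (by norm_num)
  have hs0 : 0 < Real.sqrt 2 := Real.sqrt_pos.mpr (by norm_num)
  have hc2 : (2:ℝ) < Real.exp 1 := c_gt
  set c := Real.exp 1 with hc
  set s := Real.sqrt 2 with hs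
  have hc1 : (0:ℝ) < c - 1 := by linarith
  have hKs : Kfun s = -s := by
    have h9 : 2 + (c - 2) * s ^ 2 * c = 2 * (c - 1) ^ 2 := by
      linear_combination (c - 2) * c * hs2
    rw [Kfun, div_eq_iff (by rw [h9]; positivity : (0:ℝ) < 2 + (c - 2) * s ^ 2 * c).ne']
    linear_combination (-(s*c)) * hs2
  have hAs : afun s = s := by
    rw [afun, div_eq_iff (by positivity : (0:ℝ) < (c - 1) * s).ne']
    linear_combination hs2
  rw [qfun, hKs, hAs, div_self hs0.ne', Real.log_one]
  ring

lemma lo_lt_hi : Real.sqrt (2 / Real.exp 1) < Real.sqrt 2 := by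
  have hc2 : (2:ℝ) < Real.exp 1 := c_gt
  apply Real.sqrt_lt_sqrt (by positivity)
  rw [div_lt_iff₀ (by linarith)]
  nlinarith

lemma mem_facts (b : ℝ)
    (hb : b ∈ Set.Ioo (Real.sqrt (2 / Real.exp 1)) (Real.sqrt 2)) :
    0 < b ∧ 2 < b ^ 2 * Real.exp 1 ∧ b ^ 2 < 2 := by
  have hc2 : (2:ℝ) < Real.exp 1 := c_gt
  have hlo0 : 0 < Real.sqrt (2 / Real.exp 1) := Real.sqrt_pos.mpr (by positivity)
  have hb0 : 0 < b := lt_trans hlo0 hb.1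
  have h1 : 2 / Real.exp 1 < b ^ 2 := (Real.sqrt_lt' hb0).mp hb.1
  have h2 : b ^ 2 < 2 := (Real.lt_sqrt hb0.le).mp hb.2
  refine ⟨hb0, ?_, h2⟩
  rw [div_lt_iff₀ (by linarith)] at h1
  linarith

lemma tendsto_right : Tendsto qfun
    (nhdsWithin (Real.sqrt 2)
      (Set.Ioo (Real.sqrt (2 / Real.exp 1)) (Real.sqrt 2)))
    (nhds 0) := by
  have hs2 : (Real.sqrt 2) ^ 2 = 2 := Real.sq_sqrt (by norm_num)
  have hs0 : 0 < Real.sqrt 2 := Real.sqrt_pos.mpr (by norm_num)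
  have hc2 : (2:ℝ) < Real.exp 1 := c_gt
  have hd := qfun_hasDerivAt (Real.sqrt 2) hs0 (by rw [hs2]; linarith)
  have := hd.differentiableAt.continuousAt.tendsto
  rw [qfun_sqrt_two] at this
  exact this.mono_left nhdsWithin_le_nhds

lemma tendsto_left : Tendsto qfun
    (nhdsWithin (Real.sqrt (2 / Real.exp 1))
      (Set.Ioo (Real.sqrt (2 / Real.exp 1)) (Real.sqrt 2)))
    (nhds (1 / Real.exp 1)) := by
  have hc2 : (2:ℝ) < Real.exp 1 := c_gt
  set c := Real.exp 1 with hc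
  have hc0 : (0:ℝ) < c := by linarith
  set lo := Real.sqrt (2 / c) with hlo
  set hi := Real.sqrt 2 with hhi
  have hlo2 : lo ^ 2 = 2 / c := Real.sq_sqrt (by positivity)
  have hlo0 : 0 < lo := Real.sqrt_pos.mpr (by positivity)
  have hloc : lo ^ 2 * c = 2 := by rw [hlo2]; field_simp
  have hDlo : 2 + (c - 2) * lo ^ 2 * c ≠ 0 := by
    rw [show (c-2) * lo^2 * c = (c-2) * (lo^2 * c) by ring, hloc]; nlinarith
  have hcblo : (c - 1) * lo ≠ 0 :=
    (mul_pos (by linarith : (0:ℝ) < c - 1) hlo0).ne'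
  have cA : ContinuousAt afun lo := by
    apply ContinuousAt.div
    · fun_prop
    · fun_prop
    · exact hcblo
  have hA0 : afun lo = 0 := by
    rw [afun, show lo ^ 2 * c - 2 = 0 by rw [hloc]; ring]
    simp
  -- the first part of the decomposition
  have hg1 : Tendsto (fun b => (1/2) * (b ^ 2 - (Kfun b) ^ 2 + Kfun b * (b - afun b) -
      (Kfun b) ^ 2 * Real.log b)) (nhds lo) (nhds (1 / c)) := by
    have cK : ContinuousAt Kfun lo := by
      apply ContinuousAt.div
      · fun_prop
      · fun_prop
      · exact hDlo
    have cL : ContinuousAt Real.log lo := Real.continuousAt_log hlo0.ne'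
    have hco : ContinuousAt (fun b => (1/2) * (b ^ 2 - (Kfun b) ^ 2 + Kfun b * (b - afun b) -
        (Kfun b) ^ 2 * Real.log b)) lo := by fun_prop
    have hval : (1/2) * (lo ^ 2 - (Kfun lo) ^ 2 + Kfun lo * (lo - afun lo) -
        (Kfun lo) ^ 2 * Real.log lo) = 1 / c := by
      have hK0 : Kfun lo = 0 := by
        rw [Kfun, show lo ^ 2 * c - 2 = 0 by rw [hloc]; ring]
        simp
      rw [hK0, hA0, hlo2]
      ring
    exact hval ▸ hco.tendsto
  -- membership consequences
  have hmem : ∀ b ∈ Set.Ioo lo hi, 0 < afun b := by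
    intro b hb
    obtain ⟨hb0, hbc, -⟩ := mem_facts b hb
    rw [afun]
    exact div_pos (by linarith) (mul_pos (by linarith) hb0)
  -- a(b) tends to 0 from the right
  have hAt : Tendsto afun (nhdsWithin lo (Set.Ioo lo hi)) (nhdsWithin 0 (Set.Ioi 0)) := by
    rw [tendsto_nhdsWithin_iff]
    constructor
    · exact hA0 ▸ (cA.tendsto.mono_left nhdsWithin_le_nhds)
    · filter_upwards [self_mem_nhdsWithin] with b hb
      exact hmem b hb
  -- the vanishing part
  have hg2 : Tendsto (fun b => (1/2) * ((c-1)^2 * b^2 / (2 + (c-2)*b^2*c))^2 *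
      ((afun b)^2 * Real.log (afun b))) (nhdsWithin lo (Set.Ioo lo hi)) (nhds 0) := by
    have hF1 : Tendsto (fun b => (1/2) * ((c-1)^2 * b^2 / (2 + (c-2)*b^2*c))^2)
        (nhds lo) (nhds ((1/2) * ((c-1)^2 * lo^2 / (2 + (c-2)*lo^2*c))^2)) := by
      have hco : ContinuousAt (fun b : ℝ => (c-1)^2 * b^2 / (2 + (c-2)*b^2*c)) lo :=
        ContinuousAt.div (by fun_prop) (by fun_prop) hDlo
      exact (continuousAt_const.mul (hco.pow 2)).tendsto
    have hxlog : Tendsto (fun x : ℝ => Real.log x * x ^ (2:ℝ))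
        (nhdsWithin 0 (Set.Ioi 0)) (nhds 0) :=
      tendsto_log_mul_rpow_nhdsGT_zero (by norm_num)
    have hF2 : Tendsto (fun b => (afun b)^2 * Real.log (afun b))
        (nhdsWithin lo (Set.Ioo lo hi)) (nhds 0) := by
      apply Tendsto.congr' _ (hxlog.comp hAt)
      filter_upwards [self_mem_nhdsWithin] with b hb
      have := (hmem b hb).le
      rw [Function.comp_apply,
        show (2:ℝ) = ((2:ℕ):ℝ) by norm_num, Real.rpow_natCast]
      ring
    have := (hF1.mono_left nhdsWithin_le_nhds).mul hF2
    simpa using this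
  -- combine
  have hEq : ∀ b ∈ Set.Ioo lo hi, qfun b =
      (1/2) * (b ^ 2 - (Kfun b) ^ 2 + Kfun b * (b - afun b) -
        (Kfun b) ^ 2 * Real.log b) +
      (1/2) * ((c-1)^2 * b^2 / (2 + (c-2)*b^2*c))^2 *
        ((afun b)^2 * Real.log (afun b)) := by
    intro b hb
    obtain ⟨hb0, hbc, -⟩ := mem_facts b hb
    have hSb : (0:ℝ) < b^2*c - 2 := by linarith
    have hDb : (0:ℝ) < 2 + (c-2)*b^2*c := by nlinarith
    have hAb : 0 < afun b := hmem b hb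
    have hlogsplit : Real.log (b / afun b) = Real.log b - Real.log (afun b) :=
      Real.log_div hb0.ne' hAb.ne'
    have hKid : Kfun b = -((c-1)^2 * b^2 / (2 + (c-2)*b^2*c)) * afun b := by
      have hc1 : (0:ℝ) < c - 1 := by linarith
      rw [Kfun, afun, ← hc]
      field_simp [hDb.ne', hb0.ne', hc1.ne']
    rw [qfun, hlogsplit, hKid]
    ring
  have hsum := (hg1.mono_left nhdsWithin_le_nhds).add hg2
  rw [add_zero] at hsum
  exact Tendsto.congr' (by
    filter_upwards [self_mem_nhdsWithin] with b hb
    exact (hEq b hb).symm) hsum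

/-- The parametric function `q(b)` is continuous and strictly decreasing on
`(√(2/e), √2)`, tends to `1/e` as `b → √(2/e)⁺` and to `0` as `b → √2⁻`;
hence it is a bijection from `(√(2/e), √2)` onto `(0, 1/e)`. -/
theorem qfun_strictAnti_bijective :
    ContinuousOn qfun (Set.Ioo (Real.sqrt (2 / Real.exp 1)) (Real.sqrt 2)) ∧
    StrictAntiOn qfun (Set.Ioo (Real.sqrt (2 / Real.exp 1)) (Real.sqrt 2)) ∧
    Filter.Tendsto qfun
      (nhdsWithin (Real.sqrt (2 / Real.exp 1))
        (Set.Ioo (Real.sqrt (2 / Real.exp 1)) (Real.sqrt 2)))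
      (nhds (1 / Real.exp 1)) ∧
    Filter.Tendsto qfun
      (nhdsWithin (Real.sqrt 2)
        (Set.Ioo (Real.sqrt (2 / Real.exp 1)) (Real.sqrt 2)))
      (nhds 0) ∧
    Set.BijOn qfun (Set.Ioo (Real.sqrt (2 / Real.exp 1)) (Real.sqrt 2))
      (Set.Ioo 0 (1 / Real.exp 1)) := by
  set lo := Real.sqrt (2 / Real.exp 1) with hlo
  set hi := Real.sqrt 2 with hhi
  have hlohi : lo < hi := lo_lt_hi
  have hcont : ContinuousOn qfun (Set.Ioo lo hi) := by
    intro b hb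
    obtain ⟨hb0, hbc, -⟩ := mem_facts b hb
    exact (qfun_hasDerivAt b hb0 hbc).differentiableAt.continuousAt.continuousWithinAt
  have hanti : StrictAntiOn qfun (Set.Ioo lo hi) := by
    apply strictAntiOn_of_deriv_neg (convex_Ioo lo hi) hcont
    intro x hx
    rw [interior_Ioo] at hx
    obtain ⟨hx0, hxc, hx2⟩ := mem_facts x hx
    rw [(qfun_hasDerivAt x hx0 hxc).deriv]
    exact Vg_neg (Real.exp 1) x c_gt hx0 hxc hx2
  have nb1 : (nhdsWithin lo (Set.Ioo lo hi)).NeBot := by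
    apply mem_closure_iff_nhdsWithin_neBot.mp
    rw [closure_Ioo hlohi.ne]
    exact ⟨le_refl lo, hlohi.le⟩
  have nb2 : (nhdsWithin hi (Set.Ioo lo hi)).NeBot := by
    apply mem_closure_iff_nhdsWithin_neBot.mp
    rw [closure_Ioo hlohi.ne]
    exact ⟨hlohi.le, le_refl hi⟩
  have hmapsTo : ∀ b ∈ Set.Ioo lo hi, qfun b ∈ Set.Ioo 0 (1 / Real.exp 1) := by
    intro b hb
    constructor
    · -- 0 < qfun b
      set b' := (b + hi) / 2 with hb'
      have hb'mem : b' ∈ Set.Ioo lo hi :=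
        ⟨lt_trans hb.1 (by rw [hb']; linarith [hb.2]), by rw [hb']; linarith [hb.2]⟩
      have h1 : qfun b' < qfun b := hanti hb hb'mem (by rw [hb']; linarith [hb.2])
      have h2 : 0 ≤ qfun b' := by
        apply le_of_tendsto tendsto_right
        filter_upwards [self_mem_nhdsWithin,
          mem_nhdsWithin_of_mem_nhds (Ioi_mem_nhds hb'mem.2)] with x hx hx'
        exact (hanti hb'mem hx hx').le
      linarith
    · -- qfun b < 1/e
      set b' := (lo + b) / 2 with hb'
      have hb'mem : b' ∈ Set.Ioo lo hi :=
        ⟨by rw [hb']; linarith [hb.1], lt_trans (by rw [hb']; linarith [hb.1]) hb.2⟩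
      have h1 : qfun b < qfun b' := hanti hb'mem hb (by rw [hb']; linarith [hb.1])
      have h2 : qfun b' ≤ 1 / Real.exp 1 := by
        apply ge_of_tendsto tendsto_left
        filter_upwards [self_mem_nhdsWithin,
          mem_nhdsWithin_of_mem_nhds (Iio_mem_nhds hb'mem.1)] with x hx hx'
        exact (hanti hx hb'mem hx').le
      linarith
  refine ⟨hcont, hanti, tendsto_left, tendsto_right, hmapsTo, hanti.injOn, ?_⟩
  -- surjectivity
  intro y hy
  have e1 : ∀ᶠ x in nhdsWithin lo (Set.Ioo lo hi), y < qfun x :=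
    tendsto_left.eventually (eventually_gt_nhds hy.2)
  have e2 : ∀ᶠ x in nhdsWithin hi (Set.Ioo lo hi), qfun x < y :=
    tendsto_right.eventually (eventually_lt_nhds hy.1)
  obtain ⟨b1, hb1y, hb1⟩ := (e1.and eventually_mem_nhdsWithin).exists
  obtain ⟨b2, hb2y, hb2⟩ := (e2.and eventually_mem_nhdsWithin).exists
  have hb12 : b1 < b2 := by
    rcases lt_trichotomy b1 b2 with h | h | h
    · exact h
    · exfalso; rw [h] at hb1y; linarith
    · exfalso; have := hanti hb2 hb1 h; linarith
  have hsub : Set.Icc b1 b2 ⊆ Set.Ioo lo hi := Set.Icc_subset_Ioo hb1.1 hb2.2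
  have hIVT := intermediate_value_Icc' hb12.le (hcont.mono hsub)
  have hy' : y ∈ Set.Icc (qfun b2) (qfun b1) := ⟨hb2y.le, hb1y.le⟩
  obtain ⟨x, hx, hxy⟩ := hIVT hy'
  exact ⟨x, hsub hx, hxy⟩
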